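/- Minimax optimality of the mixture likelihood ratio test: with Q₀ := ∑_{σ ∈ S} P_{0;σ} and Q₁ := ∑_{σ ∈ S} P_{1;σ} (finite sums over the finite set S), assume Q₁ ≪ Q₀ and let ℓ := Q₁.rnDeriv Q₀. For t ∈ ℝ≥0∞ and γ ∈ [0,1] define the test φ* by φ*(x) = 1 if ℓ(x) > t, φ*(x) = γ if ℓ(x) = t, and φ*(x) = 0 if ℓ(x) < t. Then for every test ψ with P_F(ψ) ≤ P_F(φ*), one has P_M(ψ) ≥ P_M(φ*). -/

import Mathlib

open MeasureTheory
open scoped ENNReal BigOperators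

noncomputable def labelSet {ι : Type*} {n : ℕ} (ν : Fin n → ι) : Finset (Fin n → ι) :=
  letI := Classical.decEq (Fin n → ι)
  Finset.univ.image (fun π : Equiv.Perm (Fin n) => ν ∘ ⇑π)

noncomputable def prodM {X ι : Type*} [MeasurableSpace X] (μ : ι → Measure X) {n : ℕ}
    (σ : Fin n → ι) : Measure (Fin n → X) :=
  Measure.pi fun j => μ (σ j)

noncomputable def PF {X ι : Type*} [MeasurableSpace X] (μ₀ : ι → Measure X) {n : ℕ}
    (ν : Fin n → ι) (ψ : (Fin n → X) → ℝ) : ℝ :=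
  ⨆ σ ∈ labelSet ν, ∫ x, ψ x ∂(prodM μ₀ σ)

noncomputable def PM {X ι : Type*} [MeasurableSpace X] (μ₁ : ι → Measure X) {n : ℕ}
    (ν : Fin n → ι) (ψ : (Fin n → X) → ℝ) : ℝ :=
  ⨆ σ ∈ labelSet ν, ∫ x, (1 - ψ x) ∂(prodM μ₁ σ)

noncomputable def mixM {X ι : Type*} [MeasurableSpace X] (μ : ι → Measure X) {n : ℕ}
    (ν : Fin n → ι) : Measure (Fin n → X) :=
  ∑ σ ∈ labelSet ν, prodM μ σ


section Helpers
variable {X ι : Type*} [MeasurableSpace X] {n : ℕ}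

lemma mem_labelSet_iff {ν σ : Fin n → ι} :
    σ ∈ labelSet ν ↔ ∃ π : Equiv.Perm (Fin n), σ = ν ∘ ⇑π := by
  classical
  simp [labelSet, eq_comm]

lemma labelSet_nonempty (ν : Fin n → ι) : (labelSet ν).Nonempty :=
  ⟨ν ∘ ⇑(1 : Equiv.Perm (Fin n)), mem_labelSet_iff.2 ⟨1, rfl⟩⟩

lemma nu_mem_labelSet (ν : Fin n → ι) : ν ∈ labelSet ν :=
  mem_labelSet_iff.2 ⟨1, by funext j; simp⟩

lemma isProbabilityMeasure_prodM (μ : ι → Measure X) [∀ i, IsProbabilityMeasure (μ i)]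
    (σ : Fin n → ι) : IsProbabilityMeasure (prodM μ σ) := by
  unfold prodM; infer_instance

lemma isFiniteMeasure_mixM (μ : ι → Measure X) [∀ i, IsProbabilityMeasure (μ i)]
    (ν : Fin n → ι) : IsFiniteMeasure (mixM μ ν) := by
  constructor
  rw [mixM, Measure.finset_sum_apply]
  have h : ∀ σ ∈ labelSet ν, prodM μ σ Set.univ = 1 := fun σ _ => by
    haveI := isProbabilityMeasure_prodM μ σ; exact measure_univ
  rw [Finset.sum_congr rfl h]
  simp

lemma measurable_permMap (e : Equiv.Perm (Fin n)) :
    Measurable (fun x : Fin n → X => x ∘ ⇑e) :=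
  measurable_pi_lambda _ fun j => measurable_pi_apply (e j)

lemma piCongrLeft_eq_permMap (e : Equiv.Perm (Fin n)) :
    ⇑(MeasurableEquiv.piCongrLeft (fun _ : Fin n => X) e.symm)
      = (fun x : Fin n → X => x ∘ ⇑e) := by
  funext x j
  have := MeasurableEquiv.piCongrLeft_apply_apply (e.symm : Fin n ≃ Fin n)
    (β := fun _ : Fin n => X) x (e j)
  simpa using this

lemma map_prodM (μ : ι → Measure X) [∀ i, IsProbabilityMeasure (μ i)]
    (σ : Fin n → ι) (e : Equiv.Perm (Fin n)) :
    (prodM μ σ).map (fun x : Fin n → X => x ∘ ⇑e) = prodM μ (σ ∘ ⇑e) := by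
  have h := Measure.pi_map_piCongrLeft (e.symm : Fin n ≃ Fin n)
    (μ := fun j : Fin n => μ ((σ ∘ ⇑e) j))
  rw [← piCongrLeft_eq_permMap e]
  simpa [prodM] using h

lemma labelSet_comp_mem {ν σ : Fin n → ι} (e : Equiv.Perm (Fin n)) (hσ : σ ∈ labelSet ν) :
    σ ∘ ⇑e ∈ labelSet ν := by
  obtain ⟨π, rfl⟩ := mem_labelSet_iff.1 hσ
  exact mem_labelSet_iff.2 ⟨e.trans π, rfl⟩

lemma map_mixM (μ : ι → Measure X) [∀ i, IsProbabilityMeasure (μ i)]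
    (ν : Fin n → ι) (e : Equiv.Perm (Fin n)) :
    (mixM μ ν).map (fun x : Fin n → X => x ∘ ⇑e) = mixM μ ν := by
  classical
  have hmap : ∀ s : Finset (Fin n → ι),
      (∑ σ ∈ s, prodM μ σ).map (fun x : Fin n → X => x ∘ ⇑e)
        = ∑ σ ∈ s, (prodM μ σ).map (fun x : Fin n → X => x ∘ ⇑e) := by
    intro s
    induction s using Finset.induction with
    | empty => simp [Measure.map_zero]
    | insert _ _ hnot ih =>
      rw [Finset.sum_insert hnot, Finset.sum_insert hnot, Measure.map_add _ _ (measurable_permMap e), ih]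
  rw [mixM, hmap]
  simp_rw [map_prodM]
  refine Finset.sum_nbij' (fun σ => σ ∘ ⇑e) (fun σ => σ ∘ ⇑e.symm) ?_ ?_ ?_ ?_ ?_
  · intro σ hσ; exact labelSet_comp_mem e hσ
  · intro σ hσ; exact labelSet_comp_mem e.symm hσ
  · intro σ _; funext j; simp
  · intro σ _; funext j; simp
  · intro σ _; rfl

end Helpers

section Helpers2
variable {X ι : Type*} [MeasurableSpace X] {n : ℕ}

lemma rnDeriv_mixM_comp (μ₀ μ₁ : ι → Measure X)
    [∀ i, IsProbabilityMeasure (μ₀ i)] [∀ i, IsProbabilityMeasure (μ₁ i)]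
    (ν : Fin n → ι) (e : Equiv.Perm (Fin n)) :
    (fun x : Fin n → X => (mixM μ₁ ν).rnDeriv (mixM μ₀ ν) (x ∘ ⇑e))
      =ᵐ[mixM μ₀ ν] (mixM μ₁ ν).rnDeriv (mixM μ₀ ν) := by
  haveI := isFiniteMeasure_mixM μ₀ ν
  haveI := isFiniteMeasure_mixM μ₁ ν
  have hE := (MeasurableEquiv.piCongrLeft (fun _ : Fin n => X) e.symm).measurableEmbedding
  have h := hE.rnDeriv_map (mixM μ₁ ν) (mixM μ₀ ν)
  rw [piCongrLeft_eq_permMap e] at h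
  rwa [map_mixM, map_mixM] at h

lemma integrable_of_bdd {α : Type*} [MeasurableSpace α] {P : Measure α} [IsFiniteMeasure P]
    {f : α → ℝ} (hf : Measurable f) (h0 : ∀ x, 0 ≤ f x) (h1 : ∀ x, f x ≤ 1) :
    Integrable f P := by
  refine Integrable.mono' (integrable_const 1) hf.aestronglyMeasurable ?_
  exact Filter.Eventually.of_forall fun x => by
    rw [Real.norm_eq_abs, abs_of_nonneg (h0 x)]; exact h1 x

lemma real_biSup_le {A : Type*} {s : Finset A} {g : A → ℝ} {c : ℝ} (hc : 0 ≤ c)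
    (h : ∀ σ ∈ s, g σ ≤ c) : (⨆ σ ∈ s, g σ) ≤ c :=
  Real.iSup_le (fun σ => Real.iSup_le (fun hσ => h σ hσ) hc) hc

lemma real_le_biSup {A : Type*} {s : Finset A} {g : A → ℝ} (hb : ∀ σ ∈ s, g σ ≤ 1)
    {σ : A} (hσ : σ ∈ s) : g σ ≤ ⨆ σ ∈ s, g σ := by
  have hbdd : BddAbove (Set.range fun σ' => ⨆ _ : σ' ∈ s, g σ') := by
    refine ⟨1, fun y hy => ?_⟩
    obtain ⟨σ', rfl⟩ := hy
    exact Real.iSup_le (fun h => hb σ' h) zero_le_one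
  haveI : Nonempty (σ ∈ s) := ⟨hσ⟩
  have h1 : g σ = ⨆ _ : σ ∈ s, g σ := (ciSup_const).symm
  rw [h1]
  exact le_ciSup hbdd σ

lemma neyman_pearson {α : Type*} [MeasurableSpace α] (Q₀ Q₁ : Measure α)
    [IsFiniteMeasure Q₀] [IsFiniteMeasure Q₁] (hac : Q₁ ≪ Q₀)
    (t : ℝ≥0∞) (_γ : ℝ)
    (φ ψ : α → ℝ) (hφmeas : Measurable φ) (hψmeas : Measurable ψ)
    (hφ0 : ∀ x, 0 ≤ φ x) (hφ1 : ∀ x, φ x ≤ 1)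
    (hψ0 : ∀ x, 0 ≤ ψ x) (hψ1 : ∀ x, ψ x ≤ 1)
    (h1 : ∀ x, t < Q₁.rnDeriv Q₀ x → φ x = 1)
    (h0 : ∀ x, Q₁.rnDeriv Q₀ x < t → φ x = 0)
    (hint : ∫ x, ψ x ∂Q₀ ≤ ∫ x, φ x ∂Q₀) :
    ∫ x, ψ x ∂Q₁ ≤ ∫ x, φ x ∂Q₁ := by
  set ℓ := Q₁.rnDeriv Q₀ with hℓ
  have hℓmeas : Measurable ℓ := Measure.measurable_rnDeriv _ _
  have hIψ0 : Integrable ψ Q₀ := integrable_of_bdd hψmeas hψ0 hψ1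
  have hIφ0 : Integrable φ Q₀ := integrable_of_bdd hφmeas hφ0 hφ1
  have hIψ1 : Integrable ψ Q₁ := integrable_of_bdd hψmeas hψ0 hψ1
  have hIφ1 : Integrable φ Q₁ := integrable_of_bdd hφmeas hφ0 hφ1
  rcases eq_or_ne t ∞ with ht | ht
  · -- t = ∞ : φ = 0 a.e. Q₀, and hint forces ψ = 0 a.e. Q₀
    have hφae : φ =ᵐ[Q₀] 0 := by
      filter_upwards [Measure.rnDeriv_lt_top Q₁ Q₀] with x hx
      exact h0 x (ht ▸ hx)
    have hφint0 : ∫ x, φ x ∂Q₀ = 0 := by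
      rw [integral_congr_ae hφae]; simp
    have hψ0' : ∫ x, ψ x ∂Q₀ = 0 :=
      le_antisymm (hφint0 ▸ hint) (integral_nonneg hψ0)
    have hψae : ψ =ᵐ[Q₀] 0 :=
      (integral_eq_zero_iff_of_nonneg hψ0 hIψ0).1 hψ0'
    have hψae1 : ψ =ᵐ[Q₁] 0 := hac.ae_le hψae
    rw [integral_congr_ae hψae1]; simp only [Pi.zero_apply, integral_zero]
    exact integral_nonneg hφ0
  · -- t finite
    set t' := t.toReal with ht'
    have key : ∀ᵐ x ∂Q₀, 0 ≤ (φ x - ψ x) * ((ℓ x).toReal - t') := by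
      filter_upwards [Measure.rnDeriv_lt_top Q₁ Q₀] with x hx
      rcases lt_trichotomy (ℓ x) t with h | h | h
      · have hφx := h0 x h
        have h1' : (ℓ x).toReal ≤ t' := ENNReal.toReal_mono ht h.le
        have h2' : φ x - ψ x ≤ 0 := by rw [hφx]; linarith [hψ0 x]
        nlinarith
      · rw [h, sub_self, mul_zero]
      · have hφx := h1 x h
        have h1' : t' ≤ (ℓ x).toReal := ENNReal.toReal_mono hx.ne h.le
        have h2' : 0 ≤ φ x - ψ x := by rw [hφx]; linarith [hψ1 x]
        exact mul_nonneg h2' (by linarith)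
    have hg : Integrable (fun x => (ℓ x).toReal * (φ x - ψ x)) Q₀ := by
      refine Integrable.mono' (Measure.integrable_toReal_rnDeriv (μ := Q₁) (ν := Q₀))
        ((hℓmeas.ennreal_toReal.mul ((hφmeas.sub hψmeas))).aestronglyMeasurable) ?_
      refine Filter.Eventually.of_forall fun x => ?_
      rw [Real.norm_eq_abs, abs_mul, abs_of_nonneg ENNReal.toReal_nonneg]
      have : |φ x - ψ x| ≤ 1 := by
        rw [abs_le]; constructor <;> nlinarith [hφ0 x, hφ1 x, hψ0 x, hψ1 x]
      calc (ℓ x).toReal * |φ x - ψ x| ≤ (ℓ x).toReal * 1 :=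
            mul_le_mul_of_nonneg_left this ENNReal.toReal_nonneg
        _ = (ℓ x).toReal := mul_one _
    have hh : Integrable (fun x => t' * (φ x - ψ x)) Q₀ :=
      ((hIφ0.sub hIψ0).const_mul t')
    have hsum : 0 ≤ ∫ x, ((ℓ x).toReal * (φ x - ψ x) - t' * (φ x - ψ x)) ∂Q₀ := by
      refine integral_nonneg_of_ae ?_
      filter_upwards [key] with x hx
      simp only [Pi.zero_apply]
      nlinarith [hx]
    rw [integral_sub hg hh] at hsum
    have hrn : ∫ x, (ℓ x).toReal * (φ x - ψ x) ∂Q₀ = ∫ x, (φ x - ψ x) ∂Q₁ := by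
      simpa [smul_eq_mul] using integral_rnDeriv_smul hac (f := fun x => φ x - ψ x)
    have hts : ∫ x, t' * (φ x - ψ x) ∂Q₀ = t' * (∫ x, φ x ∂Q₀ - ∫ x, ψ x ∂Q₀) := by
      rw [integral_const_mul, integral_sub hIφ0 hIψ0]
    have ht'0 : 0 ≤ t' := ENNReal.toReal_nonneg
    have h2 : 0 ≤ ∫ x, (φ x - ψ x) ∂Q₁ := by
      rw [hrn] at hsum
      have : 0 ≤ t' * (∫ x, φ x ∂Q₀ - ∫ x, ψ x ∂Q₀) := mul_nonneg ht'0 (by linarith)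
      linarith [hts ▸ hsum]
    rw [integral_sub hIφ1 hIψ1] at h2
    linarith

end Helpers2


theorem mixture_lrt_minimax_optimal
    {X ι : Type*} [MeasurableSpace X]
    (μ₀ μ₁ : ι → Measure X)
    [∀ i, IsProbabilityMeasure (μ₀ i)] [∀ i, IsProbabilityMeasure (μ₁ i)]
    {n : ℕ} (ν : Fin n → ι)
    (hac : mixM μ₁ ν ≪ mixM μ₀ ν)
    (t : ℝ≥0∞) (γ : ℝ) (hγ0 : 0 ≤ γ) (hγ1 : γ ≤ 1)
    (φ : (Fin n → X) → ℝ)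
    (hφ1 : ∀ x, t < (mixM μ₁ ν).rnDeriv (mixM μ₀ ν) x → φ x = 1)
    (hφγ : ∀ x, (mixM μ₁ ν).rnDeriv (mixM μ₀ ν) x = t → φ x = γ)
    (hφ0 : ∀ x, (mixM μ₁ ν).rnDeriv (mixM μ₀ ν) x < t → φ x = 0)
    (ψ : (Fin n → X) → ℝ) (hψmeas : Measurable ψ)
    (hψ0 : ∀ x, 0 ≤ ψ x) (hψ1 : ∀ x, ψ x ≤ 1)
    (hPF : PF μ₀ ν ψ ≤ PF μ₀ ν φ) :
    PM μ₁ ν ψ ≥ PM μ₁ ν φ := by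
  classical
  haveI h₀ : ∀ σ : Fin n → ι, IsProbabilityMeasure (prodM μ₀ σ) := isProbabilityMeasure_prodM μ₀
  haveI h₁ : ∀ σ : Fin n → ι, IsProbabilityMeasure (prodM μ₁ σ) := isProbabilityMeasure_prodM μ₁
  haveI := isFiniteMeasure_mixM μ₀ ν
  haveI := isFiniteMeasure_mixM μ₁ ν
  set ℓ := (mixM μ₁ ν).rnDeriv (mixM μ₀ ν) with hℓ
  have hφeq : φ = fun x => if t < ℓ x then (1 : ℝ) else if ℓ x = t then γ else 0 := by
    funext x
    rcases lt_trichotomy (ℓ x) t with h | h | h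
    · rw [hφ0 x h, if_neg (not_lt.2 h.le), if_neg h.ne]
    · rw [hφγ x h, if_neg (not_lt.2 h.le), if_pos h]
    · rw [hφ1 x h, if_pos h]
  have hℓmeas : Measurable ℓ := Measure.measurable_rnDeriv _ _
  have hφmeas : Measurable φ := by
    rw [hφeq]
    refine Measurable.ite ?_ measurable_const (Measurable.ite ?_ measurable_const measurable_const)
    · exact measurableSet_lt measurable_const hℓmeas
    · exact hℓmeas (measurableSet_singleton t)
  have hφb0 : ∀ x, 0 ≤ φ x := by
    intro x; rw [hφeq]; dsimp only; split_ifs <;> linarith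
  have hφb1 : ∀ x, φ x ≤ 1 := by
    intro x; rw [hφeq]; dsimp only; split_ifs <;> linarith
  -- absolute continuity of each product w.r.t. the mixture
  have hle : ∀ (μ : ι → Measure X), ∀ σ ∈ labelSet ν, prodM μ σ ≪ mixM μ ν := by
    intro μ σ hσ
    refine Measure.AbsolutelyContinuous.mk fun A hA h0 => ?_
    rw [mixM, Measure.finset_sum_apply] at h0
    exact (Finset.sum_eq_zero_iff_of_nonneg fun _ _ => zero_le).1 h0 σ hσ
  have hle0 : ∀ σ ∈ labelSet ν, prodM μ₀ σ ≪ mixM μ₀ ν := hle μ₀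
  have hle1 : ∀ σ ∈ labelSet ν, prodM μ₁ σ ≪ mixM μ₁ ν := hle μ₁
  -- a.e. invariance of φ
  have hφinv : ∀ e : Equiv.Perm (Fin n), (fun x => φ (x ∘ ⇑e)) =ᵐ[mixM μ₀ ν] φ := by
    intro e
    filter_upwards [rnDeriv_mixM_comp μ₀ μ₁ ν e] with x hx
    rw [hφeq]
    dsimp only
    rw [hℓ, hx]
  -- constancy of ∫ φ over the label set (null hypothesis side)
  have hconst0 : ∀ σ ∈ labelSet ν, ∫ x, φ x ∂(prodM μ₀ σ) = ∫ x, φ x ∂(prodM μ₀ ν) := by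
    intro σ hσ
    obtain ⟨π, rfl⟩ := mem_labelSet_iff.1 hσ
    rw [← map_prodM μ₀ ν π,
      integral_map (measurable_permMap π).aemeasurable hφmeas.aestronglyMeasurable]
    refine integral_congr_ae ?_
    exact ((hφinv π).filter_mono (hle0 ν (nu_mem_labelSet ν)).ae_le)
  -- constancy on the alternative side
  have hφinv1 : ∀ e : Equiv.Perm (Fin n),
      (fun x => 1 - φ (x ∘ ⇑e)) =ᵐ[mixM μ₁ ν] (fun x => 1 - φ x) := by
    intro e
    filter_upwards [(hφinv e).filter_mono hac.ae_le] with x hx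
    rw [hx]
  have hconst1 : ∀ σ ∈ labelSet ν,
      ∫ x, (1 - φ x) ∂(prodM μ₁ σ) = ∫ x, (1 - φ x) ∂(prodM μ₁ ν) := by
    intro σ hσ
    obtain ⟨π, rfl⟩ := mem_labelSet_iff.1 hσ
    rw [← map_prodM μ₁ ν π,
      integral_map (measurable_permMap π).aemeasurable
        (by fun_prop : Measurable fun x : Fin n → X => 1 - φ x).aestronglyMeasurable]
    refine integral_congr_ae ?_
    exact ((hφinv1 π).filter_mono (hle1 ν (nu_mem_labelSet ν)).ae_le)
  -- bounds on integrals
  have hb : ∀ (f : (Fin n → X) → ℝ), (∀ x, 0 ≤ f x) → (∀ x, f x ≤ 1) →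
      ∀ (P : Measure (Fin n → X)) [IsProbabilityMeasure P], ∫ x, f x ∂P ≤ 1 := by
    intro f hf0 hf1 P hP
    calc ∫ x, f x ∂P ≤ ∫ _, (1 : ℝ) ∂P := by
          refine integral_mono_of_nonneg (Filter.Eventually.of_forall hf0)
            (integrable_const 1) (Filter.Eventually.of_forall hf1)
      _ = 1 := by simp
  -- PF φ and PM φ as single integrals
  have hPFφ : PF μ₀ ν φ = ∫ x, φ x ∂(prodM μ₀ ν) := by
    unfold PF
    refine le_antisymm (real_biSup_le (integral_nonneg hφb0) fun σ hσ => le_of_eq (hconst0 σ hσ)) ?_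
    exact real_le_biSup (fun σ _ => hb φ hφb0 hφb1 _) (nu_mem_labelSet ν)
  have hPMφ : PM μ₁ ν φ = ∫ x, (1 - φ x) ∂(prodM μ₁ ν) := by
    unfold PM
    refine le_antisymm (real_biSup_le (integral_nonneg fun x => by simp only [Pi.zero_apply]; linarith [hφb1 x])
      fun σ hσ => le_of_eq (hconst1 σ hσ)) ?_
    exact real_le_biSup (g := fun σ => ∫ x, (1 - φ x) ∂(prodM μ₁ σ))
      (fun σ _ => hb _ (fun x => by linarith [hφb1 x])
      (fun x => by linarith [hφb0 x]) _) (nu_mem_labelSet ν)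
  set N := (labelSet ν).card with hN
  have hNpos : 0 < N := Finset.card_pos.2 (labelSet_nonempty ν)
  -- mixture integrals as sums
  have hQ0ψ : ∫ x, ψ x ∂(mixM μ₀ ν) = ∑ σ ∈ labelSet ν, ∫ x, ψ x ∂(prodM μ₀ σ) := by
    rw [mixM]
    exact integral_finset_sum_measure fun σ _ => integrable_of_bdd hψmeas hψ0 hψ1
  have hQ0φ : ∫ x, φ x ∂(mixM μ₀ ν) = (N : ℝ) * ∫ x, φ x ∂(prodM μ₀ ν) := by
    rw [mixM, integral_finset_sum_measure fun σ _ => integrable_of_bdd hφmeas hφb0 hφb1,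
      Finset.sum_congr rfl hconst0, Finset.sum_const, nsmul_eq_mul]
  have hQ1φ : ∫ x, (1 - φ x) ∂(mixM μ₁ ν) = (N : ℝ) * ∫ x, (1 - φ x) ∂(prodM μ₁ ν) := by
    rw [mixM, integral_finset_sum_measure fun σ _ =>
        integrable_of_bdd (by fun_prop : Measurable fun x : Fin n → X => 1 - φ x)
          (fun x => by linarith [hφb1 x]) (fun x => by linarith [hφb0 x]),
      Finset.sum_congr rfl hconst1, Finset.sum_const, nsmul_eq_mul]
  have hQ1ψ : ∫ x, (1 - ψ x) ∂(mixM μ₁ ν) = ∑ σ ∈ labelSet ν, ∫ x, (1 - ψ x) ∂(prodM μ₁ σ) := by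
    rw [mixM]
    exact integral_finset_sum_measure fun σ _ =>
      integrable_of_bdd (measurable_const.sub hψmeas)
        (fun x => by linarith [hψ1 x]) (fun x => by linarith [hψ0 x])
  -- type-I comparison at the mixture level
  have hmix0 : ∫ x, ψ x ∂(mixM μ₀ ν) ≤ ∫ x, φ x ∂(mixM μ₀ ν) := by
    rw [hQ0ψ, hQ0φ]
    calc ∑ σ ∈ labelSet ν, ∫ x, ψ x ∂(prodM μ₀ σ)
        ≤ ∑ _σ ∈ labelSet ν, PF μ₀ ν ψ := by
          refine Finset.sum_le_sum fun σ hσ => ?_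
          exact real_le_biSup (g := fun σ => ∫ x, ψ x ∂(prodM μ₀ σ))
            (fun σ' _ => hb ψ hψ0 hψ1 _) hσ
      _ = (N : ℝ) * PF μ₀ ν ψ := by rw [Finset.sum_const, nsmul_eq_mul]
      _ ≤ (N : ℝ) * PF μ₀ ν φ := by
          exact mul_le_mul_of_nonneg_left hPF (Nat.cast_nonneg N)
      _ = (N : ℝ) * ∫ x, φ x ∂(prodM μ₀ ν) := by rw [hPFφ]
  -- Neyman–Pearson
  have hNP : ∫ x, ψ x ∂(mixM μ₁ ν) ≤ ∫ x, φ x ∂(mixM μ₁ ν) :=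
    neyman_pearson (mixM μ₀ ν) (mixM μ₁ ν) hac t γ φ ψ hφmeas hψmeas hφb0 hφb1 hψ0 hψ1
      hφ1 hφ0 hmix0
  -- type-II conclusion
  have hIψ1 : Integrable ψ (mixM μ₁ ν) := integrable_of_bdd hψmeas hψ0 hψ1
  have hIφ1 : Integrable φ (mixM μ₁ ν) := integrable_of_bdd hφmeas hφb0 hφb1
  have hsub : ∫ x, (1 - φ x) ∂(mixM μ₁ ν) ≤ ∫ x, (1 - ψ x) ∂(mixM μ₁ ν) := by
    rw [integral_sub (integrable_const 1) hIφ1, integral_sub (integrable_const 1) hIψ1]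
    linarith
  have hfinal : (N : ℝ) * PM μ₁ ν φ ≤ (N : ℝ) * PM μ₁ ν ψ := by
    calc (N : ℝ) * PM μ₁ ν φ = ∫ x, (1 - φ x) ∂(mixM μ₁ ν) := by rw [hPMφ, hQ1φ]
      _ ≤ ∫ x, (1 - ψ x) ∂(mixM μ₁ ν) := hsub
      _ = ∑ σ ∈ labelSet ν, ∫ x, (1 - ψ x) ∂(prodM μ₁ σ) := hQ1ψ
      _ ≤ ∑ _σ ∈ labelSet ν, PM μ₁ ν ψ := by
          refine Finset.sum_le_sum fun σ hσ => ?_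
          exact real_le_biSup (g := fun σ => ∫ x, (1 - ψ x) ∂(prodM μ₁ σ))
            (fun σ' _ => hb _ (fun x => by linarith [hψ1 x])
            (fun x => by linarith [hψ0 x]) _) hσ
      _ = (N : ℝ) * PM μ₁ ν ψ := by rw [Finset.sum_const, nsmul_eq_mul]
  have : (0 : ℝ) < N := by exact_mod_cast hNpos
  exact le_of_mul_le_mul_left hfinal this
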